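/- Let (𝓐, 𝓑) be a recovering pair over a finite set X with 𝓐 nonempty, and for i ∈ X let a_i = |{A ∈ 𝓐 : i ∈ A}| / |𝓐|. Let S ⊆ C ⊆ X be such that S = C \ B for some B ∈ 𝓑. Then there exists a subset P ⊆ S such that log₂(|𝓐_{C,S,P}| / |𝓐|) ≥ −∑_{i ∈ S} h(a_i). -/

import Mathlib

/-- `(𝓐, 𝓑)` is a recovering pair over the ground set `X`. -/
def IsRecoveringPair (X : Finset ℕ) (𝓐 𝓑 : Finset (Finset ℕ)) : Prop :=
  (∀ A ∈ 𝓐, A ⊆ X) ∧ (∀ B ∈ 𝓑, B ⊆ X) ∧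
  (∀ A ∈ 𝓐, ∀ A' ∈ 𝓐, ∀ B ∈ 𝓑, ∀ B' ∈ 𝓑, A \ B = A' \ B' → A = A') ∧
  (∀ A ∈ 𝓐, ∀ A' ∈ 𝓐, ∀ B ∈ 𝓑, ∀ B' ∈ 𝓑, B \ A = B' \ A' → B = B')

/-- The first family of the filtered pair: `{A \ C : A ∈ 𝓐, A ∩ S = P}`. -/
def filteredA (𝓐 : Finset (Finset ℕ)) (C S P : Finset ℕ) : Finset (Finset ℕ) :=
  (𝓐.filter fun A => A ∩ S = P).image fun A => A \ C

/-- The binary entropy function `h(p) = -p log₂ p - (1-p) log₂ (1-p)`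
(with the conventions `h(0) = h(1) = 0`, automatic since `logb 2 0 = 0`). -/
noncomputable def binEnt (p : ℝ) : ℝ :=
  -(p * Real.logb 2 p) - (1 - p) * Real.logb 2 (1 - p)

theorem stmt_15 (X : Finset ℕ) (𝓐 𝓑 : Finset (Finset ℕ))
    (hrec : IsRecoveringPair X 𝓐 𝓑) (hne : 𝓐.Nonempty)
    (a : ℕ → ℝ) (ha : ∀ i, a i = ((𝓐.filter fun A => i ∈ A).card : ℝ) / 𝓐.card)
    (S C : Finset ℕ) (hSC : S ⊆ C) (hCX : C ⊆ X) (hS : ∃ B ∈ 𝓑, S = C \ B) :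
    ∃ P ⊆ S, Real.logb 2 (((filteredA 𝓐 C S P).card : ℝ) / 𝓐.card)
      ≥ -∑ i ∈ S, binEnt (a i) := by
  classical
  obtain ⟨B, hB, hSB⟩ := hS
  obtain ⟨hAX, hBX, hrec1, -⟩ := hrec
  have hnpos : 0 < (𝓐.card : ℝ) := by
    exact_mod_cast Finset.card_pos.mpr hne
  set n : ℝ := (𝓐.card : ℝ) with hn
  set m : Finset ℕ → ℕ := fun P => (𝓐.filter fun A => A ∩ S = P).card with hm
  set r : Finset ℕ → ℝ := fun P => (m P : ℝ) / n with hrdef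
  have hr0 : ∀ P, 0 ≤ r P := fun P => by
    rw [hrdef]; positivity
  -- decomposition of A \ B
  have hdecomp : ∀ A : Finset ℕ, A \ B = (A ∩ S) ∪ ((A \ C) \ B) := by
    intro A
    ext x
    simp only [hSB, Finset.mem_sdiff, Finset.mem_union, Finset.mem_inter]
    tauto
  -- the filtered family has the same cardinality as the fiber
  have hcard : ∀ P, (filteredA 𝓐 C S P).card = m P := by
    intro P
    refine Finset.card_image_of_injOn ?_
    intro A hA A' hA' hAA'
    simp only [Finset.coe_filter, Set.mem_setOf_eq] at hA hA'
    have hAC : A \ C = A' \ C := hAA'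
    refine hrec1 A hA.1 A' hA'.1 B hB B hB ?_
    rw [hdecomp A, hdecomp A', hA.2, hA'.2, hAC]
  -- partition of 𝓐 by A ∩ S
  have hfib : 𝓐.card = ∑ P ∈ S.powerset, m P := by
    apply Finset.card_eq_sum_card_fiberwise
    intro A _
    exact Finset.mem_powerset.mpr Finset.inter_subset_right
  have hsumn : (∑ P ∈ S.powerset, (m P : ℝ)) = n := by
    rw [hn, hfib]; push_cast; ring
  have hsum1 : ∑ P ∈ S.powerset, r P = 1 := by
    rw [hrdef, ← Finset.sum_div, hsumn, div_self (ne_of_gt hnpos)]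
  -- a i as a sum of the r P with i ∈ P
  have hai : ∀ i ∈ S, a i = ∑ P ∈ S.powerset.filter (fun P => i ∈ P), r P := by
    intro i hi
    have hcard2 : ((𝓐.filter fun A => i ∈ A)).card
        = ∑ P ∈ S.powerset.filter (fun P => i ∈ P), m P := by
      have hmemb : ∀ A ∈ 𝓐.filter (fun A => i ∈ A),
          A ∩ S ∈ S.powerset.filter (fun P => i ∈ P) := by
        intro A hA
        rw [Finset.mem_filter] at hA ⊢
        exact ⟨Finset.mem_powerset.mpr Finset.inter_subset_right,
          Finset.mem_inter.mpr ⟨hA.2, hi⟩⟩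
      rw [Finset.card_eq_sum_card_fiberwise hmemb]
      apply Finset.sum_congr rfl
      intro P hP
      rw [Finset.mem_filter, Finset.mem_powerset] at hP
      rw [hm]
      congr 1
      ext A
      simp only [Finset.mem_filter]
      constructor
      · rintro ⟨⟨h1, -⟩, h3⟩; exact ⟨h1, h3⟩
      · rintro ⟨h1, h3⟩
        refine ⟨⟨h1, ?_⟩, h3⟩
        have h4 : i ∈ P := hP.2
        rw [← h3] at h4
        exact (Finset.mem_inter.mp h4).1
    rw [ha i, hcard2]
    push_cast
    rw [Finset.sum_div]
  have hai' : ∀ i ∈ S, 1 - a i = ∑ P ∈ S.powerset.filter (fun P => i ∉ P), r P := by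
    intro i hi
    have h := Finset.sum_filter_add_sum_filter_not S.powerset (fun P => i ∈ P) r
    rw [hsum1] at h
    have h2 := hai i hi
    linarith
  have ha0 : ∀ i, 0 ≤ a i := fun i => by rw [ha]; exact div_nonneg (Nat.cast_nonneg _) hnpos.le
  have ha1 : ∀ i, a i ≤ 1 := fun i => by
    rw [ha i, hn]
    rw [div_le_one hnpos, hn]
    exact_mod_cast Finset.card_filter_le _ _
  set Q : Finset ℕ → ℝ := fun P => ∏ i ∈ S, (if i ∈ P then a i else 1 - a i) with hQdef
  set w : Finset ℕ → ℝ := fun P => ∑ i ∈ S,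
    (if i ∈ P then Real.logb 2 (a i) else Real.logb 2 (1 - a i)) with hwdef
  have hQsplit : ∀ P ∈ S.powerset, Q P = (∏ i ∈ P, a i) * ∏ i ∈ S \ P, (1 - a i) := by
    intro P hP
    rw [Finset.mem_powerset] at hP
    have h1 : (∏ i ∈ P, a i) = ∏ i ∈ P, (if i ∈ P then a i else 1 - a i) :=
      Finset.prod_congr rfl (fun i hi => (if_pos hi).symm)
    have h2 : (∏ i ∈ S \ P, (1 - a i))
        = ∏ i ∈ S \ P, (if i ∈ P then a i else 1 - a i) :=
      Finset.prod_congr rfl (fun i hi => (if_neg (Finset.mem_sdiff.mp hi).2).symm)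
    rw [h1, h2, ← Finset.prod_union Finset.disjoint_sdiff,
      Finset.union_sdiff_of_subset hP]
  have hQsum : ∑ P ∈ S.powerset, Q P = 1 := by
    rw [Finset.sum_congr rfl hQsplit, ← Finset.prod_add]
    simp
  have hQnonneg : ∀ P, 0 ≤ Q P := by
    intro P
    simp only [hQdef]
    apply Finset.prod_nonneg
    intro i _
    by_cases hiP : i ∈ P
    · rw [if_pos hiP]; exact ha0 i
    · rw [if_neg hiP]; linarith [ha1 i]
  have hQfac : ∀ P ∈ S.powerset, 0 < r P → ∀ i ∈ S,
      0 < (if i ∈ P then a i else 1 - a i) := by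
    intro P hP hrP i hi
    by_cases hiP : i ∈ P
    · rw [if_pos hiP]
      have hmem : P ∈ S.powerset.filter (fun P' => i ∈ P') :=
        Finset.mem_filter.mpr ⟨hP, hiP⟩
      have h2 : r P ≤ a i := by
        rw [hai i hi]
        exact Finset.single_le_sum (fun P' _ => hr0 P') hmem
      linarith
    · rw [if_neg hiP]
      have hmem : P ∈ S.powerset.filter (fun P' => i ∉ P') :=
        Finset.mem_filter.mpr ⟨hP, hiP⟩
      have h2 : r P ≤ 1 - a i := by
        rw [hai' i hi]
        exact Finset.single_le_sum (fun P' _ => hr0 P') hmem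
      linarith
  have hQpos : ∀ P ∈ S.powerset, 0 < r P → 0 < Q P := by
    intro P hP hrP
    exact Finset.prod_pos (hQfac P hP hrP)
  have hlog2 : 0 < Real.log 2 := Real.log_pos one_lt_two
  have hwQ : ∀ P ∈ S.powerset, 0 < r P → w P = Real.logb 2 (Q P) := by
    intro P hP hrP
    rw [hwdef, hQdef]
    simp only [Real.logb]
    rw [Real.log_prod (fun i hi => ne_of_gt (hQfac P hP hrP i hi)), Finset.sum_div]
    apply Finset.sum_congr rfl
    intro i hi
    by_cases hiP : i ∈ P
    · rw [if_pos hiP, if_pos hiP]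
    · rw [if_neg hiP, if_neg hiP]
  -- main identity
  have hmain : (-∑ i ∈ S, binEnt (a i)) = ∑ P ∈ S.powerset, r P * w P := by
    have hterm : ∀ i ∈ S, -binEnt (a i)
        = ∑ P ∈ S.powerset, r P *
          (if i ∈ P then Real.logb 2 (a i) else Real.logb 2 (1 - a i)) := by
      intro i hi
      have h1 : ∑ P ∈ S.powerset, r P *
          (if i ∈ P then Real.logb 2 (a i) else Real.logb 2 (1 - a i))
          = (∑ P ∈ S.powerset.filter (fun P => i ∈ P), r P) * Real.logb 2 (a i)
            + (∑ P ∈ S.powerset.filter (fun P => i ∉ P), r P)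
              * Real.logb 2 (1 - a i) := by
        rw [← Finset.sum_filter_add_sum_filter_not S.powerset (fun P => i ∈ P)
          (fun P => r P * (if i ∈ P then Real.logb 2 (a i) else Real.logb 2 (1 - a i)))]
        rw [Finset.sum_mul, Finset.sum_mul]
        congr 1
        · exact Finset.sum_congr rfl (fun P hP => by
            rw [if_pos (Finset.mem_filter.mp hP).2])
        · exact Finset.sum_congr rfl (fun P hP => by
            rw [if_neg (Finset.mem_filter.mp hP).2])
      rw [h1, ← hai i hi, ← hai' i hi, binEnt]
      ring
    calc (-∑ i ∈ S, binEnt (a i)) = ∑ i ∈ S, -binEnt (a i) :=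
          by rw [Finset.sum_neg_distrib]
      _ = ∑ i ∈ S, ∑ P ∈ S.powerset, r P *
          (if i ∈ P then Real.logb 2 (a i) else Real.logb 2 (1 - a i)) :=
          Finset.sum_congr rfl hterm
      _ = ∑ P ∈ S.powerset, ∑ i ∈ S, r P *
          (if i ∈ P then Real.logb 2 (a i) else Real.logb 2 (1 - a i)) :=
          Finset.sum_comm
      _ = ∑ P ∈ S.powerset, r P * w P := by
          apply Finset.sum_congr rfl
          intro P _
          rw [hwdef, Finset.mul_sum]
  -- Gibbs inequality
  have hGibbs : ∑ P ∈ S.powerset, r P * w P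
      ≤ ∑ P ∈ S.powerset, r P * Real.logb 2 (r P) := by
    have hterm : ∀ P ∈ S.powerset,
        r P * w P - r P * Real.logb 2 (r P) ≤ (Q P - r P) / Real.log 2 := by
      intro P hP
      rcases eq_or_lt_of_le (hr0 P) with h0 | h0
      · rw [← h0]
        simp only [zero_mul, sub_zero, sub_self]
        have := hQnonneg P
        positivity
      · rw [hwQ P hP h0]
        have hQp := hQpos P hP h0
        have h1 : Real.logb 2 (Q P) - Real.logb 2 (r P) = Real.logb 2 (Q P / r P) :=
          (Real.logb_div (ne_of_gt hQp) (ne_of_gt h0)).symm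
        have h2 : Real.logb 2 (Q P / r P) ≤ (Q P / r P - 1) / Real.log 2 := by
          rw [Real.logb]
          exact (div_le_div_iff_of_pos_right hlog2).mpr
            (Real.log_le_sub_one_of_pos (div_pos hQp h0))
        calc r P * Real.logb 2 (Q P) - r P * Real.logb 2 (r P)
            = r P * Real.logb 2 (Q P / r P) := by rw [← mul_sub, h1]
          _ ≤ r P * ((Q P / r P - 1) / Real.log 2) :=
              mul_le_mul_of_nonneg_left h2 (le_of_lt h0)
          _ = (Q P - r P) / Real.log 2 := by
              field_simp
    have h := Finset.sum_le_sum hterm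
    rw [Finset.sum_sub_distrib] at h
    have h2 : ∑ P ∈ S.powerset, (Q P - r P) / Real.log 2 = 0 := by
      rw [← Finset.sum_div, Finset.sum_sub_distrib, hQsum, hsum1]
      simp
    rw [h2, sub_nonpos] at h
    exact h
  -- choose the maximizer
  obtain ⟨P0, hP0pow, hP0max⟩ :=
    Finset.exists_max_image S.powerset m ⟨∅, Finset.empty_mem_powerset S⟩
  obtain ⟨A0, hA0⟩ := hne
  have hm0 : 0 < m P0 := by
    have h1 : 0 < m (A0 ∩ S) :=
      Finset.card_pos.mpr ⟨A0, Finset.mem_filter.mpr ⟨hA0, rfl⟩⟩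
    exact lt_of_lt_of_le h1
      (hP0max (A0 ∩ S) (Finset.mem_powerset.mpr Finset.inter_subset_right))
  have hr0pos : 0 < r P0 := by
    rw [hrdef]
    apply div_pos _ hnpos
    exact_mod_cast hm0
  have hfinal : ∑ P ∈ S.powerset, r P * Real.logb 2 (r P) ≤ Real.logb 2 (r P0) := by
    have hterm : ∀ P ∈ S.powerset,
        r P * Real.logb 2 (r P) ≤ r P * Real.logb 2 (r P0) := by
      intro P hP
      rcases eq_or_lt_of_le (hr0 P) with h0 | h0
      · rw [← h0]; simp
      · apply mul_le_mul_of_nonneg_left _ (hr0 P)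
        apply (Real.logb_le_logb one_lt_two h0 hr0pos).mpr
        rw [hrdef]
        apply (div_le_div_iff_of_pos_right hnpos).mpr
        exact_mod_cast hP0max P hP
    calc ∑ P ∈ S.powerset, r P * Real.logb 2 (r P)
        ≤ ∑ P ∈ S.powerset, r P * Real.logb 2 (r P0) := Finset.sum_le_sum hterm
      _ = (∑ P ∈ S.powerset, r P) * Real.logb 2 (r P0) := (Finset.sum_mul _ _ _).symm
      _ = Real.logb 2 (r P0) := by rw [hsum1, one_mul]
  refine ⟨P0, Finset.mem_powerset.mp hP0pow, ?_⟩
  have heq : ((filteredA 𝓐 C S P0).card : ℝ) / (𝓐.card : ℝ) = r P0 := by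
    rw [hcard P0, hrdef]
  rw [heq, ge_iff_le, hmain]
  linarith
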